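/- Let N be a Hermitian-preserving and trace-preserving (HPTP) linear map on M_d(ℂ). Then there exist real numbers η₁ ≥ 0, η₂ ≥ 0 and CPTP maps O₁, O₂ on M_d(ℂ) such that N = η₁ O₁ − η₂ O₂. -/

import Mathlib

open scoped Kronecker ComplexOrder
open Matrix

noncomputable section

/-- `id_k ⊗ N` applied blockwise. -/
def idTensor {n m : Type*} (k : Type*)
    (N : Matrix n n ℂ → Matrix m m ℂ)
    (M : Matrix (k × n) (k × n) ℂ) : Matrix (k × m) (k × m) ℂ :=
  Matrix.of fun p q => N (Matrix.of fun a b => M (p.1, a) (q.1, b)) p.2 q.2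

/-- Trace-preserving. -/
def IsTP {n m : Type*} [Fintype n] [Fintype m]
    (N : Matrix n n ℂ → Matrix m m ℂ) : Prop :=
  ∀ X, (N X).trace = X.trace

/-- Hermitian-preserving. -/
def IsHP {n m : Type*} (N : Matrix n n ℂ → Matrix m m ℂ) : Prop :=
  ∀ X, X.IsHermitian → (N X).IsHermitian

/-- Completely positive: for every `k`, `id_k ⊗ N` preserves positive semidefiniteness. -/
def IsCP {n m : Type*} [Fintype n] [Fintype m]
    (N : Matrix n n ℂ → Matrix m m ℂ) : Prop :=
  ∀ (k : ℕ) (M : Matrix (Fin k × n) (Fin k × n) ℂ),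
    M.PosSemidef → (idTensor (Fin k) N M).PosSemidef

/-- Completely positive and trace-preserving (quantum channel). -/
def IsCPTP {n m : Type*} [Fintype n] [Fintype m]
    (N : Matrix n n ℂ → Matrix m m ℂ) : Prop :=
  IsLinearMap ℂ N ∧ IsCP N ∧ IsTP N

/-- Completely positive and trace non-increasing. -/
def IsCPTN {n m : Type*} [Fintype n] [Fintype m]
    (N : Matrix n n ℂ → Matrix m m ℂ) : Prop :=
  IsLinearMap ℂ N ∧ IsCP N ∧ ∀ X : Matrix n n ℂ, X.PosSemidef → (N X).trace ≤ X.trace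

/-- Costs of finite quasiprobability decompositions of `N` into CPTP maps. -/
def decompCosts {n m : Type*} [Fintype n] [Fintype m]
    (N : Matrix n n ℂ → Matrix m m ℂ) : Set ℝ :=
  { c | ∃ (s : ℕ) (η : Fin s → ℝ) (O : Fin s → (Matrix n n ℂ → Matrix m m ℂ)),
      (∀ i, IsCPTP (O i)) ∧ (∀ X, N X = ∑ i, (η i : ℂ) • O i X) ∧ c = ∑ i, |η i| }

/-- The physical implementability `ν(N)`. -/
noncomputable def nu {n m : Type*} [Fintype n] [Fintype m]
    (N : Matrix n n ℂ → Matrix m m ℂ) : ℝ :=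
  Real.logb 2 (sInf (decompCosts N))

/-- The Choi matrix of a linear map. -/
def choiMatrix {n m : Type*} [DecidableEq n]
    (N : Matrix n n ℂ → Matrix m m ℂ) : Matrix (n × m) (n × m) ℂ :=
  Matrix.of fun p q => N (Matrix.single p.1 q.1 1) p.2 q.2

/-- Partial trace over the second tensor factor. -/
def ptraceB {n m : Type*} [Fintype m] (J : Matrix (n × m) (n × m) ℂ) :
    Matrix n n ℂ :=
  Matrix.of fun i j => ∑ a, J (i, a) (j, a)

/-- The positive semidefinite square root, as `Matrix.PosSemidef.sqrt` was defined in older Mathlib. -/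
noncomputable def posSemidefSqrtOld {k : Type*} [Fintype k] [DecidableEq k]
    {A : Matrix k k ℂ} (hA : A.PosSemidef) : Matrix k k ℂ :=
  hA.1.eigenvectorUnitary.1 * Matrix.diagonal ((↑) ∘ (√·) ∘ hA.1.eigenvalues) *
    (star hA.1.eigenvectorUnitary : Matrix k k ℂ)

/-- The trace norm of a matrix. -/
noncomputable def traceNorm {k : Type*} [Fintype k] [DecidableEq k]
    (X : Matrix k k ℂ) : ℝ :=
  ((posSemidefSqrtOld (Matrix.posSemidef_conjTranspose_mul_self X)).trace).re


/-- Tensor product of two maps. -/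
def tensorMap {n₁ n₂ m₂ : Type*} [Fintype n₁] [DecidableEq n₁]
    (M : Matrix n₁ n₁ ℂ → Matrix n₁ n₁ ℂ) (N : Matrix n₂ n₂ ℂ → Matrix m₂ m₂ ℂ)
    (X : Matrix (n₁ × n₂) (n₁ × n₂) ℂ) : Matrix (n₁ × m₂) (n₁ × m₂) ℂ :=
  ∑ i : n₁, ∑ j : n₁,
    (M (Matrix.single i j 1)) ⊗ₖ (N (Matrix.of fun a b => X (i, a) (j, b)))



section Aux

variable {n m : Type*} [Fintype n] [Fintype m] [DecidableEq n] [DecidableEq m]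

set_option linter.unusedSectionVars false

lemma psd_sum_aux {ι : Type*} (s : Finset ι) (f : ι → Matrix m m ℂ)
    (h : ∀ i ∈ s, (f i).PosSemidef) : (∑ i ∈ s, f i).PosSemidef := by
  classical
  induction s using Finset.induction_on with
  | empty => simpa using Matrix.PosSemidef.zero
  | insert _ _ hni ih =>
    rw [Finset.sum_insert hni]
    exact (h _ (Finset.mem_insert_self _ _)).add
      (ih fun i hi => h i (Finset.mem_insert_of_mem hi))

lemma smul_psd_aux {A : Matrix m m ℂ} (hA : A.PosSemidef) {r : ℝ} (hr : 0 ≤ r) :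
    (((r : ℂ)) • A).PosSemidef := by
  constructor
  · unfold Matrix.IsHermitian
    rw [Matrix.conjTranspose_smul, hA.1.eq]
    congr 1
    simp
  · exact (hA.smul (show (0:ℂ) ≤ (r:ℂ) from Complex.zero_le_real.mpr hr)).2

lemma map_entry_eq_aux (N : Matrix n n ℂ → Matrix m m ℂ) (hlin : IsLinearMap ℂ N)
    (X : Matrix n n ℂ) (p2 q2 : m) :
    N X p2 q2 = ∑ p1, ∑ q1, X p1 q1 * choiMatrix N (p1, p2) (q1, q2) := by
  have hX : X = ∑ p1, ∑ q1, X p1 q1 • Matrix.single p1 q1 1 := by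
    conv_lhs => rw [matrix_eq_sum_single X]
    refine Finset.sum_congr rfl fun p1 _ => Finset.sum_congr rfl fun q1 _ => ?_
    rw [Matrix.smul_single]; simp
  have : N X = ∑ p1, ∑ q1, X p1 q1 • N (Matrix.single p1 q1 1) := by
    calc N X = (IsLinearMap.mk' N hlin) X := rfl
    _ = ∑ p1, ∑ q1, X p1 q1 • N (Matrix.single p1 q1 1) := by
        conv_lhs => rw [hX]
        simp only [map_sum, _root_.map_smul, IsLinearMap.mk'_apply]
  rw [this]
  simp [Matrix.sum_apply, choiMatrix]

open scoped MatrixOrder in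
lemma cp_of_choi_psd_aux (N : Matrix n n ℂ → Matrix m m ℂ) (hlin : IsLinearMap ℂ N)
    (hJ : (choiMatrix N).PosSemidef) : IsCP N := by
  intro k M hM
  set S := (CFC.sqrt (choiMatrix N) : Matrix (n × m) (n × m) ℂ) with hSdef
  have hS : S * Sᴴ = choiMatrix N := by
    rw [(CFC.sqrt_nonneg (choiMatrix N)).posSemidef.1.eq]
    exact CFC.sqrt_mul_sqrt_self _ hJ.nonneg
  have hJe : ∀ p q, choiMatrix N p q = ∑ r, S p r * star (S q r) := by
    intro p q
    rw [← hS, Matrix.mul_apply]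
    simp [Matrix.conjTranspose_apply]
  set B : (n × m) → Matrix (Fin k × m) (Fin k × n) ℂ := fun r =>
    Matrix.of fun p q => if p.1 = q.1 then S (q.2, p.2) r else 0 with hBdef
  have key : idTensor (Fin k) N M = ∑ r : n × m, B r * M * (B r)ᴴ := by
    ext ⟨c, p2⟩ ⟨c', q2⟩
    have L : idTensor (Fin k) N M (c, p2) (c', q2)
        = ∑ p1, ∑ q1, ∑ r : n × m,
            M (c, p1) (c', q1) * (S ((p1, p2)) r * star (S ((q1, q2)) r)) := by
      simp only [idTensor, Matrix.of_apply]
      rw [map_entry_eq_aux N hlin]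
      refine Finset.sum_congr rfl fun p1 _ => Finset.sum_congr rfl fun q1 _ => ?_
      rw [hJe, Finset.mul_sum]
      simp
    have R : (∑ r : n × m, B r * M * (B r)ᴴ) (c, p2) (c', q2)
        = ∑ r : n × m, ∑ q1, ∑ p1,
            (S ((p1, p2)) r * M (c, p1) (c', q1)) * star (S ((q1, q2)) r) := by
      rw [Matrix.sum_apply]
      refine Finset.sum_congr rfl fun r _ => ?_
      simp only [Matrix.mul_apply, Matrix.conjTranspose_apply, hBdef, Matrix.of_apply,
        Fintype.sum_prod_type, ite_mul, zero_mul, mul_ite, mul_zero, apply_ite star,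
        star_zero, Finset.sum_ite_irrel, Finset.sum_const_zero, Finset.sum_ite_eq,
        Finset.sum_ite_eq', Finset.mem_univ, if_true, Finset.sum_mul]
    rw [L, R]
    have h1 : ∀ (g : n → n → (n × m) → ℂ),
        (∑ p1, ∑ q1, ∑ r : n × m, g p1 q1 r)
          = ∑ r : n × m, ∑ q1, ∑ p1, g p1 q1 r := fun g =>
      calc (∑ p1, ∑ q1, ∑ r : n × m, g p1 q1 r)
          = ∑ p1, ∑ r : n × m, ∑ q1, g p1 q1 r :=
            Finset.sum_congr rfl fun p1 _ => Finset.sum_comm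
        _ = ∑ r : n × m, ∑ p1, ∑ q1, g p1 q1 r := Finset.sum_comm
        _ = ∑ r : n × m, ∑ q1, ∑ p1, g p1 q1 r :=
            Finset.sum_congr rfl fun r _ => Finset.sum_comm
    rw [h1]
    refine Finset.sum_congr rfl fun r _ => Finset.sum_congr rfl fun q1 _ =>
      Finset.sum_congr rfl fun p1 _ => ?_
    ring
  rw [key]
  exact psd_sum_aux _ _ fun r _ => hM.mul_mul_conjTranspose_same (B r)

lemma hp_conjTranspose_aux (N : Matrix n n ℂ → Matrix m m ℂ)
    (hlin : IsLinearMap ℂ N) (hHP : IsHP N) (X : Matrix n n ℂ) :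
    N Xᴴ = (N X)ᴴ := by
  have hA : (X + Xᴴ).IsHermitian := by
    simp [Matrix.IsHermitian, Matrix.conjTranspose_add, add_comm]
  have hB : (Complex.I • (X - Xᴴ)).IsHermitian := by
    simp only [Matrix.IsHermitian, Matrix.conjTranspose_smul, Matrix.conjTranspose_sub,
      Matrix.conjTranspose_conjTranspose, Complex.star_def, Complex.conj_I]
    rw [neg_smul, ← smul_neg, neg_sub]
  have h1 := (hHP _ hA).eq
  have h2 := (hHP _ hB).eq
  have hXd : Xᴴ = (1/2 : ℂ) • (X + Xᴴ) + (Complex.I/2) • (Complex.I • (X - Xᴴ)) := by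
    rw [smul_smul, show (Complex.I/2) * Complex.I = -(1/2) by
      rw [div_mul_eq_mul_div, Complex.I_mul_I]; norm_num]
    module
  have hX : X = (1/2 : ℂ) • (X + Xᴴ) + (-(Complex.I)/2) • (Complex.I • (X - Xᴴ)) := by
    rw [smul_smul, show (-(Complex.I)/2) * Complex.I = (1/2 : ℂ) by
      rw [div_mul_eq_mul_div, neg_mul, Complex.I_mul_I]; norm_num]
    module
  have hNXd : N Xᴴ = (1/2 : ℂ) • N (X + Xᴴ) + (Complex.I/2) • N (Complex.I • (X - Xᴴ)) := by
    conv_lhs => rw [hXd]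
    rw [hlin.map_add, hlin.map_smul, hlin.map_smul]
  have hNX : N X = (1/2 : ℂ) • N (X + Xᴴ) + (-(Complex.I)/2) • N (Complex.I • (X - Xᴴ)) := by
    conv_lhs => rw [hX]
    rw [hlin.map_add, hlin.map_smul, hlin.map_smul]
  rw [hNXd, hNX, Matrix.conjTranspose_add, Matrix.conjTranspose_smul,
    Matrix.conjTranspose_smul, h1, h2]
  congr 2
  · simp
  · simp [Complex.star_def, map_div₀]

lemma choi_hermitian_aux (N : Matrix n n ℂ → Matrix m m ℂ)
    (hlin : IsLinearMap ℂ N) (hHP : IsHP N) : (choiMatrix N).IsHermitian := by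
  have hstd : ∀ p1 q1 : n, (Matrix.single q1 p1 (1:ℂ))ᴴ = Matrix.single p1 q1 1 := by
    intro p1 q1
    ext a b
    simp only [Matrix.conjTranspose_apply, Matrix.single, Matrix.of_apply]
    rw [apply_ite star, star_one, star_zero]
    simp [and_comm]
  unfold Matrix.IsHermitian
  ext ⟨p1, p2⟩ ⟨q1, q2⟩
  simp only [choiMatrix, Matrix.conjTranspose_apply, Matrix.of_apply]
  calc star (N (Matrix.single q1 p1 1) q2 p2)
      = (N (Matrix.single q1 p1 1))ᴴ p2 q2 := rfl
    _ = N ((Matrix.single q1 p1 1)ᴴ) p2 q2 := by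
        rw [hp_conjTranspose_aux N hlin hHP]
    _ = N (Matrix.single p1 q1 1) p2 q2 := by rw [hstd]

lemma shift_psd_aux {k : Type*} [Fintype k] [DecidableEq k] {A : Matrix k k ℂ}
    (hA : A.IsHermitian) :
    ∃ c : ℝ, 0 ≤ c ∧ (A + ((c : ℂ)) • 1).PosSemidef := by
  refine ⟨∑ i, |hA.eigenvalues i|, by positivity, ?_⟩
  set c : ℝ := ∑ i, |hA.eigenvalues i| with hc
  set U : Matrix k k ℂ := (hA.eigenvectorUnitary : Matrix k k ℂ) with hU
  have hUU : U * star U = 1 := (Matrix.mem_unitaryGroup_iff).mp hA.eigenvectorUnitary.2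
  have hkey : A + ((c : ℂ)) • 1
      = U * (Matrix.diagonal fun i => ((hA.eigenvalues i + c : ℝ) : ℂ)) * Uᴴ := by
    have hsp := hA.spectral_theorem
    rw [Unitary.conjStarAlgAut_apply, ← hU] at hsp
    have : (Matrix.diagonal fun i => ((hA.eigenvalues i + c : ℝ) : ℂ))
        = Matrix.diagonal (RCLike.ofReal ∘ hA.eigenvalues) + ((c : ℂ)) • 1 := by
      ext i j
      rcases eq_or_ne i j with rfl | h
      · simp only [Matrix.diagonal_apply_eq, Matrix.add_apply, Matrix.smul_apply,
          Matrix.one_apply_eq, Function.comp_apply, smul_eq_mul, mul_one]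
        push_cast
        rfl
      · simp [Matrix.diagonal_apply_ne _ h, Matrix.one_apply_ne h]
    rw [this, Matrix.mul_add, Matrix.add_mul, ← Matrix.star_eq_conjTranspose, ← hsp]
    congr 1
    rw [Matrix.mul_smul, Matrix.smul_mul, mul_one, hUU]
  rw [hkey]
  refine Matrix.PosSemidef.mul_mul_conjTranspose_same ?_ U
  refine Matrix.posSemidef_diagonal_iff.mpr fun i => ?_
  refine Complex.zero_le_real.mpr ?_
  have h1 : |hA.eigenvalues i| ≤ c := by
    rw [hc]
    exact Finset.single_le_sum (f := fun j => |hA.eigenvalues j|) (fun j _ => abs_nonneg _) (Finset.mem_univ i)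
  have := neg_abs_le (hA.eigenvalues i)
  linarith

end Aux

/-- every HPTP map is a difference of two nonnegatively scaled CPTP maps. -/
theorem hptp_decomposes_into_two_cptp {d : ℕ}
    (N : Matrix (Fin d) (Fin d) ℂ → Matrix (Fin d) (Fin d) ℂ)
    (hlin : IsLinearMap ℂ N) (hHP : IsHP N) (hTP : IsTP N) :
    ∃ (η₁ η₂ : ℝ) (O₁ O₂ : Matrix (Fin d) (Fin d) ℂ → Matrix (Fin d) (Fin d) ℂ),
      0 ≤ η₁ ∧ 0 ≤ η₂ ∧ IsCPTP O₁ ∧ IsCPTP O₂ ∧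
      ∀ X, N X = (η₁ : ℂ) • O₁ X - (η₂ : ℂ) • O₂ X := by
  by_cases hd0 : d = 0
  · subst hd0
    have hid : IsCPTP (id : Matrix (Fin 0) (Fin 0) ℂ → Matrix (Fin 0) (Fin 0) ℂ) := by
      refine ⟨⟨fun x y => rfl, fun c x => rfl⟩, ?_, fun X => rfl⟩
      intro k M hM
      have : idTensor (Fin k) (id : Matrix (Fin 0) (Fin 0) ℂ → Matrix (Fin 0) (Fin 0) ℂ) M = M := by
        ext ⟨a, b⟩ ⟨c, e⟩
        exact b.elim0
      rw [this]; exact hM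
    refine ⟨0, 0, id, id, le_refl 0, le_refl 0, hid, hid, fun X => ?_⟩
    ext i j
    exact i.elim0
  · have hd : 0 < d := Nat.pos_of_ne_zero hd0
    have hdC : (d : ℂ) ≠ 0 := Nat.cast_ne_zero.mpr hd0
    obtain ⟨c, hc0, hPSD⟩ := shift_psd_aux (choi_hermitian_aux N hlin hHP)
    set D : Matrix (Fin d) (Fin d) ℂ → Matrix (Fin d) (Fin d) ℂ :=
      fun X => (X.trace / d) • (1 : Matrix (Fin d) (Fin d) ℂ) with hD
    have hDlin : IsLinearMap ℂ D := by
      constructor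
      · intro X Y
        simp only [hD, Matrix.trace_add, add_div, add_smul]
      · intro a X
        simp only [hD, Matrix.trace_smul, smul_eq_mul, mul_div_assoc, mul_smul]
    have hDTP : IsTP D := by
      intro X
      simp only [hD, Matrix.trace_smul, Matrix.trace_one, smul_eq_mul, Fintype.card_fin]
      field_simp
    have choi_D : choiMatrix D = (((d : ℝ)⁻¹ : ℝ) : ℂ) • (1 : Matrix (Fin d × Fin d) (Fin d × Fin d) ℂ) := by
      ext ⟨p1, p2⟩ ⟨q1, q2⟩
      simp only [choiMatrix, Matrix.of_apply, hD, Matrix.smul_apply, smul_eq_mul]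
      rcases eq_or_ne p1 q1 with rfl | h1
      · rw [Matrix.trace_single_eq_same]
        rcases eq_or_ne p2 q2 with rfl | h2
        · simp [Matrix.one_apply]
        · simp [Matrix.one_apply, Prod.ext_iff, h2]
      · rw [Matrix.trace_single_eq_of_ne (h := h1)]
        simp [Matrix.one_apply, Prod.ext_iff, h1]
    have hDCP : IsCP D := by
      refine cp_of_choi_psd_aux D hDlin ?_
      rw [choi_D]
      exact smul_psd_aux Matrix.PosSemidef.one (by positivity)
    have hpos : (0 : ℝ) < 1 + d * c := by positivity
    set a : ℝ := (1 + d * c)⁻¹ with ha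
    have ha0 : 0 ≤ a := by positivity
    set O₁ : Matrix (Fin d) (Fin d) ℂ → Matrix (Fin d) (Fin d) ℂ :=
      fun X => ((a : ℝ) : ℂ) • (N X + (((d * c : ℝ)) : ℂ) • D X) with hO₁
    have hO₁lin : IsLinearMap ℂ O₁ := by
      constructor
      · intro X Y
        simp only [hO₁, hlin.map_add, hDlin.map_add]
        module
      · intro r X
        simp only [hO₁, hlin.map_smul, hDlin.map_smul]
        module
    have choi_O₁ : choiMatrix O₁
        = ((a : ℝ) : ℂ) • (choiMatrix N + ((c : ℝ) : ℂ) • (1 : Matrix (Fin d × Fin d) (Fin d × Fin d) ℂ)) := by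
      have h1 : choiMatrix O₁
          = ((a : ℝ) : ℂ) • (choiMatrix N + (((d * c : ℝ)) : ℂ) • choiMatrix D) := by
        ext ⟨p1, p2⟩ ⟨q1, q2⟩
        simp [choiMatrix, hO₁, Matrix.smul_apply, Matrix.add_apply, mul_add]
      rw [h1, choi_D, smul_smul]
      congr 2
      push_cast
      field_simp
    have hO₁CP : IsCP O₁ := by
      refine cp_of_choi_psd_aux O₁ hO₁lin ?_
      rw [choi_O₁]
      exact smul_psd_aux hPSD ha0
    have hO₁TP : IsTP O₁ := by
      intro X
      simp only [hO₁, Matrix.trace_smul, Matrix.trace_add, Matrix.trace_smul, hTP X, hDTP X,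
        smul_eq_mul]
      have h0 : ((1 + d * c : ℝ) : ℂ) ≠ 0 := Complex.ofReal_ne_zero.mpr hpos.ne'
      rw [ha]
      push_cast
      field_simp
    refine ⟨1 + d * c, d * c, O₁, D, by positivity, by positivity, ⟨hO₁lin, hO₁CP, hO₁TP⟩,
      ⟨hDlin, hDCP, hDTP⟩, fun X => ?_⟩
    rw [hO₁, smul_smul]
    have h2 : ((1 + d * c : ℝ) : ℂ) * ((a : ℝ) : ℂ) = 1 := by
      rw [ha]
      push_cast
      rw [mul_inv_cancel₀]
      exact_mod_cast Complex.ofReal_ne_zero.mpr hpos.ne'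
    rw [h2, one_smul]
    push_cast
    abel

end
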